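/- G₂ acts transitively on the unit sphere S⁶ ⊂ ℝ⁷: for any unit vectors u, v ∈ ℝ⁷ there exists an ℝ-linear isometry A of (ℝ⁷, g₀) with A u = v and φ₀(Ax, Ay, Az) = φ₀(x, y, z) for all x, y, z ∈ ℝ⁷. -/

import Mathlib

open scoped RealInnerProductSpace

noncomputable section

abbrev E7 : Type := EuclideanSpace ℝ (Fin 7)

/-- `dxⁱ ∧ dxʲ ∧ dxᵏ` evaluated on the triple `(u, v, w)`. -/
def triDet (u v w : E7) (i j k : Fin 7) : ℝ :=
  Matrix.det !![u i, u j, u k; v i, v j, v k; w i, w j, w k]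

/-- The standard G₂ 3-form `φ₀ = dx¹²³ + dx¹⁴⁵ + dx¹⁶⁷ + dx²⁴⁶ − dx²⁵⁷ − dx³⁴⁷ − dx³⁵⁶`
(here with 0-indexed coordinates). -/
def phi0 (u v w : E7) : ℝ :=
  triDet u v w 0 1 2 + triDet u v w 0 3 4 + triDet u v w 0 5 6 +
    triDet u v w 1 3 5 - triDet u v w 1 4 6 - triDet u v w 2 3 6 - triDet u v w 2 4 5


lemma E7_ext (x y : E7) (h0 : x 0 = y 0) (h1 : x 1 = y 1) (h2 : x 2 = y 2) (h3 : x 3 = y 3)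
    (h4 : x 4 = y 4) (h5 : x 5 = y 5) (h6 : x 6 = y 6) : x = y := by
  ext j
  fin_cases j
  · exact h0
  · exact h1
  · exact h2
  · exact h3
  · exact h4
  · exact h5
  · exact h6

def f1 (c s : ℝ) (x : E7) : E7 :=
  WithLp.toLp 2 ![c * x 0 + s * x 1, -s * x 0 + c * x 1, x 2, c * x 3 + s * x 6, x 4, x 5, -s * x 3 + c * x 6]

@[simp] lemma f1_0 (c s : ℝ) (x : E7) : f1 c s x 0 = c * x 0 + s * x 1 := rfl
@[simp] lemma f1_1 (c s : ℝ) (x : E7) : f1 c s x 1 = -s * x 0 + c * x 1 := rfl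
@[simp] lemma f1_2 (c s : ℝ) (x : E7) : f1 c s x 2 = x 2 := rfl
@[simp] lemma f1_3 (c s : ℝ) (x : E7) : f1 c s x 3 = c * x 3 + s * x 6 := rfl
@[simp] lemma f1_4 (c s : ℝ) (x : E7) : f1 c s x 4 = x 4 := rfl
@[simp] lemma f1_5 (c s : ℝ) (x : E7) : f1 c s x 5 = x 5 := rfl
@[simp] lemma f1_6 (c s : ℝ) (x : E7) : f1 c s x 6 = -s * x 3 + c * x 6 := rfl

lemma f1_add (c s : ℝ) (x y : E7) : f1 c s (x + y) = f1 c s x + f1 c s y := by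
  have hj : ∀ i : Fin 7, (x + y) i = x i + y i := fun i => rfl
  have hj2 : ∀ i : Fin 7, (f1 c s x + f1 c s y) i = f1 c s x i + f1 c s y i := fun i => rfl
  apply E7_ext <;> simp only [hj, hj2, f1_0, f1_1, f1_2, f1_3, f1_4, f1_5, f1_6] <;> ring

lemma f1_smul (c s a' : ℝ) (x : E7) : f1 c s (a' • x) = a' • f1 c s x := by
  have hj : ∀ i : Fin 7, (a' • x) i = a' * x i := fun i => rfl
  have hj2 : ∀ i : Fin 7, (a' • f1 c s x) i = a' * f1 c s x i := fun i => rfl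
  apply E7_ext <;> simp only [hj, hj2, f1_0, f1_1, f1_2, f1_3, f1_4, f1_5, f1_6] <;> ring

lemma f1_inv (c s : ℝ) (h : c ^ 2 + s ^ 2 = 1) (x : E7) :
    f1 c (-s) (f1 c s x) = x := by
  apply E7_ext <;> simp only [f1_0, f1_1, f1_2, f1_3, f1_4, f1_5, f1_6]
  · linear_combination x 0 * h
  · linear_combination x 1 * h
  · linear_combination x 3 * h
  · linear_combination x 6 * h

lemma f1_inner (c s : ℝ) (h : c ^ 2 + s ^ 2 = 1) (x y : E7) :
    ⟪f1 c s x, f1 c s y⟫ = ⟪x, y⟫ := by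
  simp only [PiLp.inner_apply, RCLike.inner_apply, conj_trivial, Fin.sum_univ_seven,
    f1_0, f1_1, f1_2, f1_3, f1_4, f1_5, f1_6]
  linear_combination (x 0 * y 0 + x 1 * y 1 + x 3 * y 3 + x 6 * y 6) * h

def e1 (c s : ℝ) (h : c ^ 2 + s ^ 2 = 1) : E7 ≃ₗ[ℝ] E7 where
  toFun := f1 c s
  map_add' := f1_add c s
  map_smul' := f1_smul c s
  invFun := f1 c (-s)
  left_inv := f1_inv c s h
  right_inv := fun x => by
    have h' : c ^ 2 + (-s) ^ 2 = 1 := by rw [neg_sq]; exact h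
    have := f1_inv c (-s) h' x
    rwa [neg_neg] at this

def L1 (c s : ℝ) (h : c ^ 2 + s ^ 2 = 1) : E7 ≃ₗᵢ[ℝ] E7 :=
  (e1 c s h).isometryOfInner (f1_inner c s h)

@[simp] lemma L1_apply (c s : ℝ) (h : c ^ 2 + s ^ 2 = 1) (x : E7) :
    L1 c s h x = f1 c s x := rfl

lemma f1_phi (c s : ℝ) (h : c ^ 2 + s ^ 2 = 1) (x y z : E7) :
    phi0 (f1 c s x) (f1 c s y) (f1 c s z) = phi0 x y z := by
  simp only [phi0, triDet, Matrix.det_fin_three, Matrix.cons_val', Matrix.cons_val_zero,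
    Matrix.cons_val_one, Matrix.head_cons, Matrix.empty_val', Matrix.cons_val_fin_one,
    Matrix.head_fin_const, Matrix.of_apply, Matrix.cons_val_two, Matrix.tail_cons,
    f1_0, f1_1, f1_2, f1_3, f1_4, f1_5, f1_6]
  linear_combination (- x 6*y 5*z 0 + x 6*y 4*z 1 + x 6*y 3*z 2 - x 6*y 2*z 3 - x 6*y 1*z 4 + x 6*y 0*z 5 + x 5*y 6*z 0 - x 5*y 3*z 1 + x 5*y 1*z 3 - x 5*y 0*z 6 - x 4*y 6*z 1 - x 4*y 3*z 0 + x 4*y 1*z 6 + x 4*y 0*z 3 - x 3*y 6*z 2 + x 3*y 5*z 1 + x 3*y 4*z 0 + x 3*y 2*z 6 - x 3*y 1*z 5 - x 3*y 0*z 4 + x 2*y 6*z 3 - x 2*y 3*z 6 - x 2*y 1*z 0 + x 2*y 0*z 1 + x 1*y 6*z 4 - x 1*y 5*z 3 - x 1*y 4*z 6 + x 1*y 3*z 5 + x 1*y 2*z 0 - x 1*y 0*z 2 - x 0*y 6*z 5 + x 0*y 5*z 6 - x 0*y 4*z 3 + x 0*y 3*z 4 - x 0*y 2*z 1 + x 0*y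 1*z 2) * h

def f2 (c s : ℝ) (x : E7) : E7 :=
  WithLp.toLp 2 ![c * x 0 + s * x 3, x 1, c * x 2 + -s * x 5, -s * x 0 + c * x 3, x 4, s * x 2 + c * x 5, x 6]

@[simp] lemma f2_0 (c s : ℝ) (x : E7) : f2 c s x 0 = c * x 0 + s * x 3 := rfl
@[simp] lemma f2_1 (c s : ℝ) (x : E7) : f2 c s x 1 = x 1 := rfl
@[simp] lemma f2_2 (c s : ℝ) (x : E7) : f2 c s x 2 = c * x 2 + -s * x 5 := rfl
@[simp] lemma f2_3 (c s : ℝ) (x : E7) : f2 c s x 3 = -s * x 0 + c * x 3 := rfl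
@[simp] lemma f2_4 (c s : ℝ) (x : E7) : f2 c s x 4 = x 4 := rfl
@[simp] lemma f2_5 (c s : ℝ) (x : E7) : f2 c s x 5 = s * x 2 + c * x 5 := rfl
@[simp] lemma f2_6 (c s : ℝ) (x : E7) : f2 c s x 6 = x 6 := rfl

lemma f2_add (c s : ℝ) (x y : E7) : f2 c s (x + y) = f2 c s x + f2 c s y := by
  have hj : ∀ i : Fin 7, (x + y) i = x i + y i := fun i => rfl
  have hj2 : ∀ i : Fin 7, (f2 c s x + f2 c s y) i = f2 c s x i + f2 c s y i := fun i => rfl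
  apply E7_ext <;> simp only [hj, hj2, f2_0, f2_1, f2_2, f2_3, f2_4, f2_5, f2_6] <;> ring

lemma f2_smul (c s a' : ℝ) (x : E7) : f2 c s (a' • x) = a' • f2 c s x := by
  have hj : ∀ i : Fin 7, (a' • x) i = a' * x i := fun i => rfl
  have hj2 : ∀ i : Fin 7, (a' • f2 c s x) i = a' * f2 c s x i := fun i => rfl
  apply E7_ext <;> simp only [hj, hj2, f2_0, f2_1, f2_2, f2_3, f2_4, f2_5, f2_6] <;> ring

lemma f2_inv (c s : ℝ) (h : c ^ 2 + s ^ 2 = 1) (x : E7) :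
    f2 c (-s) (f2 c s x) = x := by
  apply E7_ext <;> simp only [f2_0, f2_1, f2_2, f2_3, f2_4, f2_5, f2_6]
  · linear_combination x 0 * h
  · linear_combination x 2 * h
  · linear_combination x 3 * h
  · linear_combination x 5 * h

lemma f2_inner (c s : ℝ) (h : c ^ 2 + s ^ 2 = 1) (x y : E7) :
    ⟪f2 c s x, f2 c s y⟫ = ⟪x, y⟫ := by
  simp only [PiLp.inner_apply, RCLike.inner_apply, conj_trivial, Fin.sum_univ_seven,
    f2_0, f2_1, f2_2, f2_3, f2_4, f2_5, f2_6]
  linear_combination (x 0 * y 0 + x 3 * y 3 + x 2 * y 2 + x 5 * y 5) * h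

def e2 (c s : ℝ) (h : c ^ 2 + s ^ 2 = 1) : E7 ≃ₗ[ℝ] E7 where
  toFun := f2 c s
  map_add' := f2_add c s
  map_smul' := f2_smul c s
  invFun := f2 c (-s)
  left_inv := f2_inv c s h
  right_inv := fun x => by
    have h' : c ^ 2 + (-s) ^ 2 = 1 := by rw [neg_sq]; exact h
    have := f2_inv c (-s) h' x
    rwa [neg_neg] at this

def L2 (c s : ℝ) (h : c ^ 2 + s ^ 2 = 1) : E7 ≃ₗᵢ[ℝ] E7 :=
  (e2 c s h).isometryOfInner (f2_inner c s h)

@[simp] lemma L2_apply (c s : ℝ) (h : c ^ 2 + s ^ 2 = 1) (x : E7) :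
    L2 c s h x = f2 c s x := rfl

lemma f2_phi (c s : ℝ) (h : c ^ 2 + s ^ 2 = 1) (x y z : E7) :
    phi0 (f2 c s x) (f2 c s y) (f2 c s z) = phi0 x y z := by
  simp only [phi0, triDet, Matrix.det_fin_three, Matrix.cons_val', Matrix.cons_val_zero,
    Matrix.cons_val_one, Matrix.head_cons, Matrix.empty_val', Matrix.cons_val_fin_one,
    Matrix.head_fin_const, Matrix.of_apply, Matrix.cons_val_two, Matrix.tail_cons,
    f2_0, f2_1, f2_2, f2_3, f2_4, f2_5, f2_6]
  linear_combination (- x 6*y 5*z 0 + x 6*y 3*z 2 - x 6*y 2*z 3 + x 6*y 0*z 5 + x 5*y 6*z 0 + x 5*y 4*z 2 - x 5*y 3*z 1 - x 5*y 2*z 4 + x 5*y 1*z 3 - x 5*y 0*z 6 - x 4*y 5*z 2 - x 4*y 3*z 0 + x 4*y 2*z 5 + x 4*y 0*z 3 - x 3*y 6*z 2 + x 3*y 5*z 1 + x 3*y 4*z 0 + x 3*y 2*z 6 - x 3*y 1*z 5 - x 3*y 0*z 4 + x 2*y 6*z 3 + x 2*y 5*z 4 - x 2*y 4*z 5 - x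 2*y 3*z 6 - x 2*y 1*z 0 + x 2*y 0*z 1 - x 1*y 5*z 3 + x 1*y 3*z 5 + x 1*y 2*z 0 - x 1*y 0*z 2 - x 0*y 6*z 5 + x 0*y 5*z 6 - x 0*y 4*z 3 + x 0*y 3*z 4 - x 0*y 2*z 1 + x 0*y 1*z 2) * h

def f3 (c s : ℝ) (x : E7) : E7 :=
  WithLp.toLp 2 ![c * x 0 + s * x 2, x 1, -s * x 0 + c * x 2, x 3, c * x 4 + -s * x 6, x 5, s * x 4 + c * x 6]

@[simp] lemma f3_0 (c s : ℝ) (x : E7) : f3 c s x 0 = c * x 0 + s * x 2 := rfl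
@[simp] lemma f3_1 (c s : ℝ) (x : E7) : f3 c s x 1 = x 1 := rfl
@[simp] lemma f3_2 (c s : ℝ) (x : E7) : f3 c s x 2 = -s * x 0 + c * x 2 := rfl
@[simp] lemma f3_3 (c s : ℝ) (x : E7) : f3 c s x 3 = x 3 := rfl
@[simp] lemma f3_4 (c s : ℝ) (x : E7) : f3 c s x 4 = c * x 4 + -s * x 6 := rfl
@[simp] lemma f3_5 (c s : ℝ) (x : E7) : f3 c s x 5 = x 5 := rfl
@[simp] lemma f3_6 (c s : ℝ) (x : E7) : f3 c s x 6 = s * x 4 + c * x 6 := rfl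

lemma f3_add (c s : ℝ) (x y : E7) : f3 c s (x + y) = f3 c s x + f3 c s y := by
  have hj : ∀ i : Fin 7, (x + y) i = x i + y i := fun i => rfl
  have hj2 : ∀ i : Fin 7, (f3 c s x + f3 c s y) i = f3 c s x i + f3 c s y i := fun i => rfl
  apply E7_ext <;> simp only [hj, hj2, f3_0, f3_1, f3_2, f3_3, f3_4, f3_5, f3_6] <;> ring

lemma f3_smul (c s a' : ℝ) (x : E7) : f3 c s (a' • x) = a' • f3 c s x := by
  have hj : ∀ i : Fin 7, (a' • x) i = a' * x i := fun i => rfl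
  have hj2 : ∀ i : Fin 7, (a' • f3 c s x) i = a' * f3 c s x i := fun i => rfl
  apply E7_ext <;> simp only [hj, hj2, f3_0, f3_1, f3_2, f3_3, f3_4, f3_5, f3_6] <;> ring

lemma f3_inv (c s : ℝ) (h : c ^ 2 + s ^ 2 = 1) (x : E7) :
    f3 c (-s) (f3 c s x) = x := by
  apply E7_ext <;> simp only [f3_0, f3_1, f3_2, f3_3, f3_4, f3_5, f3_6]
  · linear_combination x 0 * h
  · linear_combination x 2 * h
  · linear_combination x 4 * h
  · linear_combination x 6 * h

lemma f3_inner (c s : ℝ) (h : c ^ 2 + s ^ 2 = 1) (x y : E7) :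
    ⟪f3 c s x, f3 c s y⟫ = ⟪x, y⟫ := by
  simp only [PiLp.inner_apply, RCLike.inner_apply, conj_trivial, Fin.sum_univ_seven,
    f3_0, f3_1, f3_2, f3_3, f3_4, f3_5, f3_6]
  linear_combination (x 0 * y 0 + x 2 * y 2 + x 4 * y 4 + x 6 * y 6) * h

def e3 (c s : ℝ) (h : c ^ 2 + s ^ 2 = 1) : E7 ≃ₗ[ℝ] E7 where
  toFun := f3 c s
  map_add' := f3_add c s
  map_smul' := f3_smul c s
  invFun := f3 c (-s)
  left_inv := f3_inv c s h
  right_inv := fun x => by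
    have h' : c ^ 2 + (-s) ^ 2 = 1 := by rw [neg_sq]; exact h
    have := f3_inv c (-s) h' x
    rwa [neg_neg] at this

def L3 (c s : ℝ) (h : c ^ 2 + s ^ 2 = 1) : E7 ≃ₗᵢ[ℝ] E7 :=
  (e3 c s h).isometryOfInner (f3_inner c s h)

@[simp] lemma L3_apply (c s : ℝ) (h : c ^ 2 + s ^ 2 = 1) (x : E7) :
    L3 c s h x = f3 c s x := rfl

lemma f3_phi (c s : ℝ) (h : c ^ 2 + s ^ 2 = 1) (x y z : E7) :
    phi0 (f3 c s x) (f3 c s y) (f3 c s z) = phi0 x y z := by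
  simp only [phi0, triDet, Matrix.det_fin_three, Matrix.cons_val', Matrix.cons_val_zero,
    Matrix.cons_val_one, Matrix.head_cons, Matrix.empty_val', Matrix.cons_val_fin_one,
    Matrix.head_fin_const, Matrix.of_apply, Matrix.cons_val_two, Matrix.tail_cons,
    f3_0, f3_1, f3_2, f3_3, f3_4, f3_5, f3_6]
  linear_combination (- x 6*y 5*z 0 + x 6*y 4*z 1 + x 6*y 3*z 2 - x 6*y 2*z 3 - x 6*y 1*z 4 + x 6*y 0*z 5 + x 5*y 6*z 0 + x 5*y 4*z 2 - x 5*y 2*z 4 - x 5*y 0*z 6 - x 4*y 6*z 1 - x 4*y 5*z 2 - x 4*y 3*z 0 + x 4*y 2*z 5 + x 4*y 1*z 6 + x 4*y 0*z 3 - x 3*y 6*z 2 + x 3*y 4*z 0 + x 3*y 2*z 6 - x 3*y 0*z 4 + x 2*y 6*z 3 + x 2*y 5*z 4 - x 2*y 4*z 5 - x 2*y 3*z 6 - x 2*y 1*z 0 + x 2*y 0*z 1 + x 1*y 6*z 4 - x 1*y 4*z 6 + x 1*y 2*z 0 - x 1*y 0*z 2 - x 0*y 6*z 5 + x 0*y 5*z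 6 - x 0*y 4*z 3 + x 0*y 3*z 4 - x 0*y 2*z 1 + x 0*y 1*z 2) * h

def f4 (c s : ℝ) (x : E7) : E7 :=
  WithLp.toLp 2 ![c * x 0 + s * x 5, x 1, c * x 2 + s * x 3, -s * x 2 + c * x 3, x 4, -s * x 0 + c * x 5, x 6]

@[simp] lemma f4_0 (c s : ℝ) (x : E7) : f4 c s x 0 = c * x 0 + s * x 5 := rfl
@[simp] lemma f4_1 (c s : ℝ) (x : E7) : f4 c s x 1 = x 1 := rfl
@[simp] lemma f4_2 (c s : ℝ) (x : E7) : f4 c s x 2 = c * x 2 + s * x 3 := rfl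
@[simp] lemma f4_3 (c s : ℝ) (x : E7) : f4 c s x 3 = -s * x 2 + c * x 3 := rfl
@[simp] lemma f4_4 (c s : ℝ) (x : E7) : f4 c s x 4 = x 4 := rfl
@[simp] lemma f4_5 (c s : ℝ) (x : E7) : f4 c s x 5 = -s * x 0 + c * x 5 := rfl
@[simp] lemma f4_6 (c s : ℝ) (x : E7) : f4 c s x 6 = x 6 := rfl

lemma f4_add (c s : ℝ) (x y : E7) : f4 c s (x + y) = f4 c s x + f4 c s y := by
  have hj : ∀ i : Fin 7, (x + y) i = x i + y i := fun i => rfl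
  have hj2 : ∀ i : Fin 7, (f4 c s x + f4 c s y) i = f4 c s x i + f4 c s y i := fun i => rfl
  apply E7_ext <;> simp only [hj, hj2, f4_0, f4_1, f4_2, f4_3, f4_4, f4_5, f4_6] <;> ring

lemma f4_smul (c s a' : ℝ) (x : E7) : f4 c s (a' • x) = a' • f4 c s x := by
  have hj : ∀ i : Fin 7, (a' • x) i = a' * x i := fun i => rfl
  have hj2 : ∀ i : Fin 7, (a' • f4 c s x) i = a' * f4 c s x i := fun i => rfl
  apply E7_ext <;> simp only [hj, hj2, f4_0, f4_1, f4_2, f4_3, f4_4, f4_5, f4_6] <;> ring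

lemma f4_inv (c s : ℝ) (h : c ^ 2 + s ^ 2 = 1) (x : E7) :
    f4 c (-s) (f4 c s x) = x := by
  apply E7_ext <;> simp only [f4_0, f4_1, f4_2, f4_3, f4_4, f4_5, f4_6]
  · linear_combination x 0 * h
  · linear_combination x 2 * h
  · linear_combination x 3 * h
  · linear_combination x 5 * h

lemma f4_inner (c s : ℝ) (h : c ^ 2 + s ^ 2 = 1) (x y : E7) :
    ⟪f4 c s x, f4 c s y⟫ = ⟪x, y⟫ := by
  simp only [PiLp.inner_apply, RCLike.inner_apply, conj_trivial, Fin.sum_univ_seven,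
    f4_0, f4_1, f4_2, f4_3, f4_4, f4_5, f4_6]
  linear_combination (x 0 * y 0 + x 5 * y 5 + x 2 * y 2 + x 3 * y 3) * h

def e4 (c s : ℝ) (h : c ^ 2 + s ^ 2 = 1) : E7 ≃ₗ[ℝ] E7 where
  toFun := f4 c s
  map_add' := f4_add c s
  map_smul' := f4_smul c s
  invFun := f4 c (-s)
  left_inv := f4_inv c s h
  right_inv := fun x => by
    have h' : c ^ 2 + (-s) ^ 2 = 1 := by rw [neg_sq]; exact h
    have := f4_inv c (-s) h' x
    rwa [neg_neg] at this

def L4 (c s : ℝ) (h : c ^ 2 + s ^ 2 = 1) : E7 ≃ₗᵢ[ℝ] E7 :=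
  (e4 c s h).isometryOfInner (f4_inner c s h)

@[simp] lemma L4_apply (c s : ℝ) (h : c ^ 2 + s ^ 2 = 1) (x : E7) :
    L4 c s h x = f4 c s x := rfl

lemma f4_phi (c s : ℝ) (h : c ^ 2 + s ^ 2 = 1) (x y z : E7) :
    phi0 (f4 c s x) (f4 c s y) (f4 c s z) = phi0 x y z := by
  simp only [phi0, triDet, Matrix.det_fin_three, Matrix.cons_val', Matrix.cons_val_zero,
    Matrix.cons_val_one, Matrix.head_cons, Matrix.empty_val', Matrix.cons_val_fin_one,
    Matrix.head_fin_const, Matrix.of_apply, Matrix.cons_val_two, Matrix.tail_cons,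
    f4_0, f4_1, f4_2, f4_3, f4_4, f4_5, f4_6]
  linear_combination (- x 6*y 5*z 0 + x 6*y 3*z 2 - x 6*y 2*z 3 + x 6*y 0*z 5 + x 5*y 6*z 0 + x 5*y 4*z 2 - x 5*y 3*z 1 - x 5*y 2*z 4 + x 5*y 1*z 3 - x 5*y 0*z 6 - x 4*y 5*z 2 - x 4*y 3*z 0 + x 4*y 2*z 5 + x 4*y 0*z 3 - x 3*y 6*z 2 + x 3*y 5*z 1 + x 3*y 4*z 0 + x 3*y 2*z 6 - x 3*y 1*z 5 - x 3*y 0*z 4 + x 2*y 6*z 3 + x 2*y 5*z 4 - x 2*y 4*z 5 - x 2*y 3*z 6 - x 2*y 1*z 0 + x 2*y 0*z 1 - x 1*y 5*z 3 + x 1*y 3*z 5 + x 1*y 2*z 0 - x 1*y 0*z 2 - x 0*y 6*z 5 + x 0*y 5*z 6 - x 0*y 4*z 3 + x 0*y 3*z 4 - x 0*y 2*z 1 + x 0*y 1*z 2) * h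

def f5 (c s : ℝ) (x : E7) : E7 :=
  WithLp.toLp 2 ![c * x 0 + s * x 4, c * x 1 + -s * x 5, x 2, x 3, -s * x 0 + c * x 4, s * x 1 + c * x 5, x 6]

@[simp] lemma f5_0 (c s : ℝ) (x : E7) : f5 c s x 0 = c * x 0 + s * x 4 := rfl
@[simp] lemma f5_1 (c s : ℝ) (x : E7) : f5 c s x 1 = c * x 1 + -s * x 5 := rfl
@[simp] lemma f5_2 (c s : ℝ) (x : E7) : f5 c s x 2 = x 2 := rfl
@[simp] lemma f5_3 (c s : ℝ) (x : E7) : f5 c s x 3 = x 3 := rfl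
@[simp] lemma f5_4 (c s : ℝ) (x : E7) : f5 c s x 4 = -s * x 0 + c * x 4 := rfl
@[simp] lemma f5_5 (c s : ℝ) (x : E7) : f5 c s x 5 = s * x 1 + c * x 5 := rfl
@[simp] lemma f5_6 (c s : ℝ) (x : E7) : f5 c s x 6 = x 6 := rfl

lemma f5_add (c s : ℝ) (x y : E7) : f5 c s (x + y) = f5 c s x + f5 c s y := by
  have hj : ∀ i : Fin 7, (x + y) i = x i + y i := fun i => rfl
  have hj2 : ∀ i : Fin 7, (f5 c s x + f5 c s y) i = f5 c s x i + f5 c s y i := fun i => rfl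
  apply E7_ext <;> simp only [hj, hj2, f5_0, f5_1, f5_2, f5_3, f5_4, f5_5, f5_6] <;> ring

lemma f5_smul (c s a' : ℝ) (x : E7) : f5 c s (a' • x) = a' • f5 c s x := by
  have hj : ∀ i : Fin 7, (a' • x) i = a' * x i := fun i => rfl
  have hj2 : ∀ i : Fin 7, (a' • f5 c s x) i = a' * f5 c s x i := fun i => rfl
  apply E7_ext <;> simp only [hj, hj2, f5_0, f5_1, f5_2, f5_3, f5_4, f5_5, f5_6] <;> ring

lemma f5_inv (c s : ℝ) (h : c ^ 2 + s ^ 2 = 1) (x : E7) :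
    f5 c (-s) (f5 c s x) = x := by
  apply E7_ext <;> simp only [f5_0, f5_1, f5_2, f5_3, f5_4, f5_5, f5_6]
  · linear_combination x 0 * h
  · linear_combination x 1 * h
  · linear_combination x 4 * h
  · linear_combination x 5 * h

lemma f5_inner (c s : ℝ) (h : c ^ 2 + s ^ 2 = 1) (x y : E7) :
    ⟪f5 c s x, f5 c s y⟫ = ⟪x, y⟫ := by
  simp only [PiLp.inner_apply, RCLike.inner_apply, conj_trivial, Fin.sum_univ_seven,
    f5_0, f5_1, f5_2, f5_3, f5_4, f5_5, f5_6]
  linear_combination (x 0 * y 0 + x 4 * y 4 + x 1 * y 1 + x 5 * y 5) * h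

def e5 (c s : ℝ) (h : c ^ 2 + s ^ 2 = 1) : E7 ≃ₗ[ℝ] E7 where
  toFun := f5 c s
  map_add' := f5_add c s
  map_smul' := f5_smul c s
  invFun := f5 c (-s)
  left_inv := f5_inv c s h
  right_inv := fun x => by
    have h' : c ^ 2 + (-s) ^ 2 = 1 := by rw [neg_sq]; exact h
    have := f5_inv c (-s) h' x
    rwa [neg_neg] at this

def L5 (c s : ℝ) (h : c ^ 2 + s ^ 2 = 1) : E7 ≃ₗᵢ[ℝ] E7 :=
  (e5 c s h).isometryOfInner (f5_inner c s h)

@[simp] lemma L5_apply (c s : ℝ) (h : c ^ 2 + s ^ 2 = 1) (x : E7) :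
    L5 c s h x = f5 c s x := rfl

lemma f5_phi (c s : ℝ) (h : c ^ 2 + s ^ 2 = 1) (x y z : E7) :
    phi0 (f5 c s x) (f5 c s y) (f5 c s z) = phi0 x y z := by
  simp only [phi0, triDet, Matrix.det_fin_three, Matrix.cons_val', Matrix.cons_val_zero,
    Matrix.cons_val_one, Matrix.head_cons, Matrix.empty_val', Matrix.cons_val_fin_one,
    Matrix.head_fin_const, Matrix.of_apply, Matrix.cons_val_two, Matrix.tail_cons,
    f5_0, f5_1, f5_2, f5_3, f5_4, f5_5, f5_6]
  linear_combination (- x 6*y 5*z 0 + x 6*y 4*z 1 - x 6*y 1*z 4 + x 6*y 0*z 5 + x 5*y 6*z 0 + x 5*y 4*z 2 - x 5*y 3*z 1 - x 5*y 2*z 4 + x 5*y 1*z 3 - x 5*y 0*z 6 - x 4*y 6*z 1 - x 4*y 5*z 2 - x 4*y 3*z 0 + x 4*y 2*z 5 + x 4*y 1*z 6 + x 4*y 0*z 3 + x 3*y 5*z 1 + x 3*y 4*z 0 - x 3*y 1*z 5 - x 3*y 0*z 4 + x 2*y 5*z 4 - x 2*y 4*z 5 - x 2*y 1*z 0 + x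 2*y 0*z 1 + x 1*y 6*z 4 - x 1*y 5*z 3 - x 1*y 4*z 6 + x 1*y 3*z 5 + x 1*y 2*z 0 - x 1*y 0*z 2 - x 0*y 6*z 5 + x 0*y 5*z 6 - x 0*y 4*z 3 + x 0*y 3*z 4 - x 0*y 2*z 1 + x 0*y 1*z 2) * h

def f6 (c s : ℝ) (x : E7) : E7 :=
  WithLp.toLp 2 ![c * x 0 + s * x 6, c * x 1 + s * x 3, x 2, -s * x 1 + c * x 3, x 4, x 5, -s * x 0 + c * x 6]

@[simp] lemma f6_0 (c s : ℝ) (x : E7) : f6 c s x 0 = c * x 0 + s * x 6 := rfl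
@[simp] lemma f6_1 (c s : ℝ) (x : E7) : f6 c s x 1 = c * x 1 + s * x 3 := rfl
@[simp] lemma f6_2 (c s : ℝ) (x : E7) : f6 c s x 2 = x 2 := rfl
@[simp] lemma f6_3 (c s : ℝ) (x : E7) : f6 c s x 3 = -s * x 1 + c * x 3 := rfl
@[simp] lemma f6_4 (c s : ℝ) (x : E7) : f6 c s x 4 = x 4 := rfl
@[simp] lemma f6_5 (c s : ℝ) (x : E7) : f6 c s x 5 = x 5 := rfl
@[simp] lemma f6_6 (c s : ℝ) (x : E7) : f6 c s x 6 = -s * x 0 + c * x 6 := rfl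

lemma f6_add (c s : ℝ) (x y : E7) : f6 c s (x + y) = f6 c s x + f6 c s y := by
  have hj : ∀ i : Fin 7, (x + y) i = x i + y i := fun i => rfl
  have hj2 : ∀ i : Fin 7, (f6 c s x + f6 c s y) i = f6 c s x i + f6 c s y i := fun i => rfl
  apply E7_ext <;> simp only [hj, hj2, f6_0, f6_1, f6_2, f6_3, f6_4, f6_5, f6_6] <;> ring

lemma f6_smul (c s a' : ℝ) (x : E7) : f6 c s (a' • x) = a' • f6 c s x := by
  have hj : ∀ i : Fin 7, (a' • x) i = a' * x i := fun i => rfl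
  have hj2 : ∀ i : Fin 7, (a' • f6 c s x) i = a' * f6 c s x i := fun i => rfl
  apply E7_ext <;> simp only [hj, hj2, f6_0, f6_1, f6_2, f6_3, f6_4, f6_5, f6_6] <;> ring

lemma f6_inv (c s : ℝ) (h : c ^ 2 + s ^ 2 = 1) (x : E7) :
    f6 c (-s) (f6 c s x) = x := by
  apply E7_ext <;> simp only [f6_0, f6_1, f6_2, f6_3, f6_4, f6_5, f6_6]
  · linear_combination x 0 * h
  · linear_combination x 1 * h
  · linear_combination x 3 * h
  · linear_combination x 6 * h

lemma f6_inner (c s : ℝ) (h : c ^ 2 + s ^ 2 = 1) (x y : E7) :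
    ⟪f6 c s x, f6 c s y⟫ = ⟪x, y⟫ := by
  simp only [PiLp.inner_apply, RCLike.inner_apply, conj_trivial, Fin.sum_univ_seven,
    f6_0, f6_1, f6_2, f6_3, f6_4, f6_5, f6_6]
  linear_combination (x 0 * y 0 + x 6 * y 6 + x 1 * y 1 + x 3 * y 3) * h

def e6 (c s : ℝ) (h : c ^ 2 + s ^ 2 = 1) : E7 ≃ₗ[ℝ] E7 where
  toFun := f6 c s
  map_add' := f6_add c s
  map_smul' := f6_smul c s
  invFun := f6 c (-s)
  left_inv := f6_inv c s h
  right_inv := fun x => by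
    have h' : c ^ 2 + (-s) ^ 2 = 1 := by rw [neg_sq]; exact h
    have := f6_inv c (-s) h' x
    rwa [neg_neg] at this

def L6 (c s : ℝ) (h : c ^ 2 + s ^ 2 = 1) : E7 ≃ₗᵢ[ℝ] E7 :=
  (e6 c s h).isometryOfInner (f6_inner c s h)

@[simp] lemma L6_apply (c s : ℝ) (h : c ^ 2 + s ^ 2 = 1) (x : E7) :
    L6 c s h x = f6 c s x := rfl

lemma f6_phi (c s : ℝ) (h : c ^ 2 + s ^ 2 = 1) (x y z : E7) :
    phi0 (f6 c s x) (f6 c s y) (f6 c s z) = phi0 x y z := by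
  simp only [phi0, triDet, Matrix.det_fin_three, Matrix.cons_val', Matrix.cons_val_zero,
    Matrix.cons_val_one, Matrix.head_cons, Matrix.empty_val', Matrix.cons_val_fin_one,
    Matrix.head_fin_const, Matrix.of_apply, Matrix.cons_val_two, Matrix.tail_cons,
    f6_0, f6_1, f6_2, f6_3, f6_4, f6_5, f6_6]
  linear_combination (- x 6*y 5*z 0 + x 6*y 4*z 1 + x 6*y 3*z 2 - x 6*y 2*z 3 - x 6*y 1*z 4 + x 6*y 0*z 5 + x 5*y 6*z 0 - x 5*y 3*z 1 + x 5*y 1*z 3 - x 5*y 0*z 6 - x 4*y 6*z 1 - x 4*y 3*z 0 + x 4*y 1*z 6 + x 4*y 0*z 3 - x 3*y 6*z 2 + x 3*y 5*z 1 + x 3*y 4*z 0 + x 3*y 2*z 6 - x 3*y 1*z 5 - x 3*y 0*z 4 + x 2*y 6*z 3 - x 2*y 3*z 6 - x 2*y 1*z 0 + x 2*y 0*z 1 + x 1*y 6*z 4 - x 1*y 5*z 3 - x 1*y 4*z 6 + x 1*y 3*z 5 + x 1*y 2*z 0 - x 1*y 0*z 2 - x 0*y 6*z 5 + x 0*y 5*z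 6 - x 0*y 4*z 3 + x 0*y 3*z 4 - x 0*y 2*z 1 + x 0*y 1*z 2) * h

lemma exM1 (u : E7) : ∃ A : E7 ≃ₗᵢ[ℝ] E7,
    (∀ x y z : E7, phi0 (A x) (A y) (A z) = phi0 x y z) ∧
    A u 1 = 0 ∧ A u 0 = Real.sqrt (u 0 ^ 2 + u 1 ^ 2) ∧
    (∀ x : E7, x 3 = 0 → x 6 = 0 → A x 3 = 0 ∧ A x 6 = 0) ∧
    (∀ x : E7, A x 2 = x 2 ∧ A x 4 = x 4 ∧ A x 5 = x 5) := by
  by_cases h0 : u 0 ^ 2 + u 1 ^ 2 = 0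
  · have hu0 : u 0 = 0 := by nlinarith [sq_nonneg (u 0), sq_nonneg (u 1)]
    have huk : u 1 = 0 := by nlinarith [sq_nonneg (u 0), sq_nonneg (u 1)]
    refine ⟨L1 1 0 (by norm_num), f1_phi 1 0 (by norm_num), ?_, ?_, ?_, ?_⟩
    · simp [huk, hu0]
    · rw [h0]; simp [huk, hu0]
    · intro x ha hb
      constructor <;> simp [ha, hb]
    · intro x
      refine ⟨rfl, rfl, rfl⟩
  · have hpos : 0 < u 0 ^ 2 + u 1 ^ 2 :=
      lt_of_le_of_ne (by positivity) (Ne.symm h0)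
    set r := Real.sqrt (u 0 ^ 2 + u 1 ^ 2) with hrdef
    have hr : 0 < r := Real.sqrt_pos.mpr hpos
    have hr2 : r ^ 2 = u 0 ^ 2 + u 1 ^ 2 := Real.sq_sqrt (le_of_lt hpos)
    have hcs : (u 0 / r) ^ 2 + (u 1 / r) ^ 2 = 1 := by
      field_simp
      linarith [hr2]
    refine ⟨L1 (u 0 / r) (u 1 / r) hcs, f1_phi _ _ hcs, ?_, ?_, ?_, ?_⟩
    · simp only [L1_apply, f1_1]
      field_simp
      ring
    · simp only [L1_apply, f1_0]
      field_simp
      linarith [hr2]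
    · intro x ha hb
      constructor <;> simp [ha, hb]
    · intro x
      refine ⟨rfl, rfl, rfl⟩

lemma exM2 (u : E7) : ∃ A : E7 ≃ₗᵢ[ℝ] E7,
    (∀ x y z : E7, phi0 (A x) (A y) (A z) = phi0 x y z) ∧
    A u 3 = 0 ∧ A u 0 = Real.sqrt (u 0 ^ 2 + u 3 ^ 2) ∧
    (∀ x : E7, x 2 = 0 → x 5 = 0 → A x 2 = 0 ∧ A x 5 = 0) ∧
    (∀ x : E7, A x 1 = x 1 ∧ A x 4 = x 4 ∧ A x 6 = x 6) := by
  by_cases h0 : u 0 ^ 2 + u 3 ^ 2 = 0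
  · have hu0 : u 0 = 0 := by nlinarith [sq_nonneg (u 0), sq_nonneg (u 3)]
    have huk : u 3 = 0 := by nlinarith [sq_nonneg (u 0), sq_nonneg (u 3)]
    refine ⟨L2 1 0 (by norm_num), f2_phi 1 0 (by norm_num), ?_, ?_, ?_, ?_⟩
    · simp [huk, hu0]
    · rw [h0]; simp [huk, hu0]
    · intro x ha hb
      constructor <;> simp [ha, hb]
    · intro x
      refine ⟨rfl, rfl, rfl⟩
  · have hpos : 0 < u 0 ^ 2 + u 3 ^ 2 :=
      lt_of_le_of_ne (by positivity) (Ne.symm h0)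
    set r := Real.sqrt (u 0 ^ 2 + u 3 ^ 2) with hrdef
    have hr : 0 < r := Real.sqrt_pos.mpr hpos
    have hr2 : r ^ 2 = u 0 ^ 2 + u 3 ^ 2 := Real.sq_sqrt (le_of_lt hpos)
    have hcs : (u 0 / r) ^ 2 + (u 3 / r) ^ 2 = 1 := by
      field_simp
      linarith [hr2]
    refine ⟨L2 (u 0 / r) (u 3 / r) hcs, f2_phi _ _ hcs, ?_, ?_, ?_, ?_⟩
    · simp only [L2_apply, f2_3]
      field_simp
      ring
    · simp only [L2_apply, f2_0]
      field_simp
      linarith [hr2]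
    · intro x ha hb
      constructor <;> simp [ha, hb]
    · intro x
      refine ⟨rfl, rfl, rfl⟩

lemma exM3 (u : E7) : ∃ A : E7 ≃ₗᵢ[ℝ] E7,
    (∀ x y z : E7, phi0 (A x) (A y) (A z) = phi0 x y z) ∧
    A u 2 = 0 ∧ A u 0 = Real.sqrt (u 0 ^ 2 + u 2 ^ 2) ∧
    (∀ x : E7, x 4 = 0 → x 6 = 0 → A x 4 = 0 ∧ A x 6 = 0) ∧
    (∀ x : E7, A x 1 = x 1 ∧ A x 3 = x 3 ∧ A x 5 = x 5) := by
  by_cases h0 : u 0 ^ 2 + u 2 ^ 2 = 0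
  · have hu0 : u 0 = 0 := by nlinarith [sq_nonneg (u 0), sq_nonneg (u 2)]
    have huk : u 2 = 0 := by nlinarith [sq_nonneg (u 0), sq_nonneg (u 2)]
    refine ⟨L3 1 0 (by norm_num), f3_phi 1 0 (by norm_num), ?_, ?_, ?_, ?_⟩
    · simp [huk, hu0]
    · rw [h0]; simp [huk, hu0]
    · intro x ha hb
      constructor <;> simp [ha, hb]
    · intro x
      refine ⟨rfl, rfl, rfl⟩
  · have hpos : 0 < u 0 ^ 2 + u 2 ^ 2 :=
      lt_of_le_of_ne (by positivity) (Ne.symm h0)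
    set r := Real.sqrt (u 0 ^ 2 + u 2 ^ 2) with hrdef
    have hr : 0 < r := Real.sqrt_pos.mpr hpos
    have hr2 : r ^ 2 = u 0 ^ 2 + u 2 ^ 2 := Real.sq_sqrt (le_of_lt hpos)
    have hcs : (u 0 / r) ^ 2 + (u 2 / r) ^ 2 = 1 := by
      field_simp
      linarith [hr2]
    refine ⟨L3 (u 0 / r) (u 2 / r) hcs, f3_phi _ _ hcs, ?_, ?_, ?_, ?_⟩
    · simp only [L3_apply, f3_2]
      field_simp
      ring
    · simp only [L3_apply, f3_0]
      field_simp
      linarith [hr2]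
    · intro x ha hb
      constructor <;> simp [ha, hb]
    · intro x
      refine ⟨rfl, rfl, rfl⟩

lemma exM4 (u : E7) : ∃ A : E7 ≃ₗᵢ[ℝ] E7,
    (∀ x y z : E7, phi0 (A x) (A y) (A z) = phi0 x y z) ∧
    A u 5 = 0 ∧ A u 0 = Real.sqrt (u 0 ^ 2 + u 5 ^ 2) ∧
    (∀ x : E7, x 2 = 0 → x 3 = 0 → A x 2 = 0 ∧ A x 3 = 0) ∧
    (∀ x : E7, A x 1 = x 1 ∧ A x 4 = x 4 ∧ A x 6 = x 6) := by
  by_cases h0 : u 0 ^ 2 + u 5 ^ 2 = 0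
  · have hu0 : u 0 = 0 := by nlinarith [sq_nonneg (u 0), sq_nonneg (u 5)]
    have huk : u 5 = 0 := by nlinarith [sq_nonneg (u 0), sq_nonneg (u 5)]
    refine ⟨L4 1 0 (by norm_num), f4_phi 1 0 (by norm_num), ?_, ?_, ?_, ?_⟩
    · simp [huk, hu0]
    · rw [h0]; simp [huk, hu0]
    · intro x ha hb
      constructor <;> simp [ha, hb]
    · intro x
      refine ⟨rfl, rfl, rfl⟩
  · have hpos : 0 < u 0 ^ 2 + u 5 ^ 2 :=
      lt_of_le_of_ne (by positivity) (Ne.symm h0)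
    set r := Real.sqrt (u 0 ^ 2 + u 5 ^ 2) with hrdef
    have hr : 0 < r := Real.sqrt_pos.mpr hpos
    have hr2 : r ^ 2 = u 0 ^ 2 + u 5 ^ 2 := Real.sq_sqrt (le_of_lt hpos)
    have hcs : (u 0 / r) ^ 2 + (u 5 / r) ^ 2 = 1 := by
      field_simp
      linarith [hr2]
    refine ⟨L4 (u 0 / r) (u 5 / r) hcs, f4_phi _ _ hcs, ?_, ?_, ?_, ?_⟩
    · simp only [L4_apply, f4_5]
      field_simp
      ring
    · simp only [L4_apply, f4_0]
      field_simp
      linarith [hr2]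
    · intro x ha hb
      constructor <;> simp [ha, hb]
    · intro x
      refine ⟨rfl, rfl, rfl⟩

lemma exM5 (u : E7) : ∃ A : E7 ≃ₗᵢ[ℝ] E7,
    (∀ x y z : E7, phi0 (A x) (A y) (A z) = phi0 x y z) ∧
    A u 4 = 0 ∧ A u 0 = Real.sqrt (u 0 ^ 2 + u 4 ^ 2) ∧
    (∀ x : E7, x 1 = 0 → x 5 = 0 → A x 1 = 0 ∧ A x 5 = 0) ∧
    (∀ x : E7, A x 2 = x 2 ∧ A x 3 = x 3 ∧ A x 6 = x 6) := by
  by_cases h0 : u 0 ^ 2 + u 4 ^ 2 = 0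
  · have hu0 : u 0 = 0 := by nlinarith [sq_nonneg (u 0), sq_nonneg (u 4)]
    have huk : u 4 = 0 := by nlinarith [sq_nonneg (u 0), sq_nonneg (u 4)]
    refine ⟨L5 1 0 (by norm_num), f5_phi 1 0 (by norm_num), ?_, ?_, ?_, ?_⟩
    · simp [huk, hu0]
    · rw [h0]; simp [huk, hu0]
    · intro x ha hb
      constructor <;> simp [ha, hb]
    · intro x
      refine ⟨rfl, rfl, rfl⟩
  · have hpos : 0 < u 0 ^ 2 + u 4 ^ 2 :=
      lt_of_le_of_ne (by positivity) (Ne.symm h0)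
    set r := Real.sqrt (u 0 ^ 2 + u 4 ^ 2) with hrdef
    have hr : 0 < r := Real.sqrt_pos.mpr hpos
    have hr2 : r ^ 2 = u 0 ^ 2 + u 4 ^ 2 := Real.sq_sqrt (le_of_lt hpos)
    have hcs : (u 0 / r) ^ 2 + (u 4 / r) ^ 2 = 1 := by
      field_simp
      linarith [hr2]
    refine ⟨L5 (u 0 / r) (u 4 / r) hcs, f5_phi _ _ hcs, ?_, ?_, ?_, ?_⟩
    · simp only [L5_apply, f5_4]
      field_simp
      ring
    · simp only [L5_apply, f5_0]
      field_simp
      linarith [hr2]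
    · intro x ha hb
      constructor <;> simp [ha, hb]
    · intro x
      refine ⟨rfl, rfl, rfl⟩

lemma exM6 (u : E7) : ∃ A : E7 ≃ₗᵢ[ℝ] E7,
    (∀ x y z : E7, phi0 (A x) (A y) (A z) = phi0 x y z) ∧
    A u 6 = 0 ∧ A u 0 = Real.sqrt (u 0 ^ 2 + u 6 ^ 2) ∧
    (∀ x : E7, x 1 = 0 → x 3 = 0 → A x 1 = 0 ∧ A x 3 = 0) ∧
    (∀ x : E7, A x 2 = x 2 ∧ A x 4 = x 4 ∧ A x 5 = x 5) := by
  by_cases h0 : u 0 ^ 2 + u 6 ^ 2 = 0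
  · have hu0 : u 0 = 0 := by nlinarith [sq_nonneg (u 0), sq_nonneg (u 6)]
    have huk : u 6 = 0 := by nlinarith [sq_nonneg (u 0), sq_nonneg (u 6)]
    refine ⟨L6 1 0 (by norm_num), f6_phi 1 0 (by norm_num), ?_, ?_, ?_, ?_⟩
    · simp [huk, hu0]
    · rw [h0]; simp [huk, hu0]
    · intro x ha hb
      constructor <;> simp [ha, hb]
    · intro x
      refine ⟨rfl, rfl, rfl⟩
  · have hpos : 0 < u 0 ^ 2 + u 6 ^ 2 :=
      lt_of_le_of_ne (by positivity) (Ne.symm h0)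
    set r := Real.sqrt (u 0 ^ 2 + u 6 ^ 2) with hrdef
    have hr : 0 < r := Real.sqrt_pos.mpr hpos
    have hr2 : r ^ 2 = u 0 ^ 2 + u 6 ^ 2 := Real.sq_sqrt (le_of_lt hpos)
    have hcs : (u 0 / r) ^ 2 + (u 6 / r) ^ 2 = 1 := by
      field_simp
      linarith [hr2]
    refine ⟨L6 (u 0 / r) (u 6 / r) hcs, f6_phi _ _ hcs, ?_, ?_, ?_, ?_⟩
    · simp only [L6_apply, f6_6]
      field_simp
      ring
    · simp only [L6_apply, f6_0]
      field_simp
      linarith [hr2]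
    · intro x ha hb
      constructor <;> simp [ha, hb]
    · intro x
      refine ⟨rfl, rfl, rfl⟩


set_option maxHeartbeats 1000000 in
lemma exists_to_e0 (u : E7) (hu : ‖u‖ = 1) :
    ∃ B : E7 ≃ₗᵢ[ℝ] E7, (∀ x y z : E7, phi0 (B x) (B y) (B z) = phi0 x y z) ∧
      B u = EuclideanSpace.single (0 : Fin 7) (1 : ℝ) := by
  obtain ⟨A1, hp1, hk1, h01, hz1, hu1⟩ := exM1 u
  obtain ⟨A2, hp2, hk2, h02, hz2, hu2⟩ := exM2 (A1 u)
  obtain ⟨A3, hp3, hk3, h03, hz3, hu3⟩ := exM3 (A2 (A1 u))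
  obtain ⟨A4, hp4, hk4, h04, hz4, hu4⟩ := exM4 (A3 (A2 (A1 u)))
  obtain ⟨A5, hp5, hk5, h05, hz5, hu5⟩ := exM5 (A4 (A3 (A2 (A1 u))))
  obtain ⟨A6, hp6, hk6, h06, hz6, hu6⟩ := exM6 (A5 (A4 (A3 (A2 (A1 u)))))
  -- zero facts propagation
  -- v1 = A1 u : coord 1 = 0
  set v1 := A1 u with hv1
  set v2 := A2 v1 with hv2
  set v3 := A3 v2 with hv3
  set v4 := A4 v3 with hv4
  set v5 := A5 v4 with hv5
  set w := A6 v5 with hw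
  clear_value v1 v2 v3 v4 v5 w
  -- exM1: k=1 comp(3,6) untouched {2,4,5}
  -- exM2: k=3 comp(2,5) untouched {1,4,6}
  -- exM3: k=2 comp(4,6) untouched {1,3,5}
  -- exM4: k=5 comp(2,3) untouched {1,4,6}
  -- exM5: k=4 comp(1,5) untouched {2,3,6}
  -- exM6: k=6 comp(1,3) untouched {2,4,5}
  have z2_1 : v2 1 = 0 := by rw [hv2, (hu2 v1).1]; exact hk1
  have z2_3 : v2 3 = 0 := hk2
  have z3_1 : v3 1 = 0 := by rw [hv3, (hu3 v2).1]; exact z2_1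
  have z3_3 : v3 3 = 0 := by rw [hv3, (hu3 v2).2.1]; exact z2_3
  have z3_2 : v3 2 = 0 := hk3
  have z4_1 : v4 1 = 0 := by rw [hv4, (hu4 v3).1]; exact z3_1
  have z4_2 : v4 2 = 0 := by rw [hv4]; exact (hz4 v3 z3_2 z3_3).1
  have z4_3 : v4 3 = 0 := by rw [hv4]; exact (hz4 v3 z3_2 z3_3).2
  have z4_5 : v4 5 = 0 := hk4
  have z5_1 : v5 1 = 0 := by rw [hv5]; exact (hz5 v4 z4_1 z4_5).1
  have z5_5 : v5 5 = 0 := by rw [hv5]; exact (hz5 v4 z4_1 z4_5).2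
  have z5_2 : v5 2 = 0 := by rw [hv5, (hu5 v4).1]; exact z4_2
  have z5_3 : v5 3 = 0 := by rw [hv5, (hu5 v4).2.1]; exact z4_3
  have z5_4 : v5 4 = 0 := hk5
  have z6_1 : w 1 = 0 := by rw [hw]; exact (hz6 v5 z5_1 z5_3).1
  have z6_3 : w 3 = 0 := by rw [hw]; exact (hz6 v5 z5_1 z5_3).2
  have z6_2 : w 2 = 0 := by rw [hw, (hu6 v5).1]; exact z5_2
  have z6_4 : w 4 = 0 := by rw [hw, (hu6 v5).2.1]; exact z5_4
  have z6_5 : w 5 = 0 := by rw [hw, (hu6 v5).2.2]; exact z5_5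
  have z6_6 : w 6 = 0 := hk6
  have hwnorm : ‖w‖ = 1 := by
    rw [hw, hv5, hv4, hv3, hv2, hv1]
    simp only [LinearIsometryEquiv.norm_map]
    exact hu
  have hw0nn : 0 ≤ w 0 := by
    rw [h06]
    exact Real.sqrt_nonneg _
  have hsq : w 0 ^ 2 = 1 := by
    have hin : ⟪w, w⟫ = (1 : ℝ) := by
      rw [real_inner_self_eq_norm_sq, hwnorm]; norm_num
    rw [PiLp.inner_apply] at hin
    simp only [RCLike.inner_apply, conj_trivial, Fin.sum_univ_seven] at hin
    rw [z6_1, z6_2, z6_3, z6_4, z6_5, z6_6] at hin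
    linear_combination hin
  have hw0 : w 0 = 1 := by
    have hfac : (w 0 - 1) * (w 0 + 1) = 0 := by linear_combination hsq
    rcases mul_eq_zero.mp hfac with h | h
    · linarith
    · linarith [hw0nn]
  refine ⟨(((((A1.trans A2).trans A3).trans A4).trans A5).trans A6), ?_, ?_⟩
  · intro x y z
    simp only [LinearIsometryEquiv.trans_apply]
    rw [hp6, hp5, hp4, hp3, hp2, hp1]
  · have hBu : (((((A1.trans A2).trans A3).trans A4).trans A5).trans A6) u = w := by
      simp only [LinearIsometryEquiv.trans_apply]
      rw [hw, hv5, hv4, hv3, hv2, hv1]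
    rw [hBu]
    apply E7_ext <;>
      simp [EuclideanSpace.single_apply, hw0, z6_1, z6_2, z6_3, z6_4, z6_5, z6_6]

/-- `G₂` acts transitively on the unit sphere `S⁶ ⊂ ℝ⁷`: for any unit vectors `u, v`
there is a linear isometry `A` of `(ℝ⁷, g₀)` with `A u = v` preserving `φ₀`. -/
theorem statement15 (u v : E7) (hu : ‖u‖ = 1) (hv : ‖v‖ = 1) :
    ∃ A : E7 ≃ₗᵢ[ℝ] E7, A u = v ∧
      ∀ x y z : E7, phi0 (A x) (A y) (A z) = phi0 x y z := by
  obtain ⟨B, hBphi, hBu⟩ := exists_to_e0 u hu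
  obtain ⟨C, hCphi, hCv⟩ := exists_to_e0 v hv
  refine ⟨B.trans C.symm, ?_, ?_⟩
  · rw [LinearIsometryEquiv.trans_apply, hBu, ← hCv, LinearIsometryEquiv.symm_apply_apply]
  · intro x y z
    simp only [LinearIsometryEquiv.trans_apply]
    have := hCphi (C.symm (B x)) (C.symm (B y)) (C.symm (B z))
    simp only [LinearIsometryEquiv.apply_symm_apply] at this
    rw [← this, hBphi]
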